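/- Let M > 0 and 𝐞 ∈ ℝ with |𝐞| < M, set r₊ = M + √(M² − 𝐞²), and define V_main(r) = r⁻²·(1 − 2M/r + 𝐞²/r²) for r ∈ [r₊, ∞). Then V_main has exactly one critical point in (r₊, ∞), located at r_crit = (3M + √(9M² − 8𝐞²))/2, and this critical point is a nondegenerate maximum (i.e. V_main''(r_crit) < 0). Moreover, there exists a constant c > 0 depending only on M and 𝐞 such that V_main'(r) ≥ c·|r − r_crit| for all r ∈ [r₊, r_crit], and −V_main'(r) ≥ c·r⁻⁴·|r − r_crit| for all r ∈ [r_crit, ∞). -/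

import Mathlib

open Set

/-- The "main" part of the effective wave-equation potential on a subextremal
Reissner–Nordström exterior has a unique, nondegenerate maximum at
`r_crit = (3M + √(9M² − 8𝐞²))/2`, with quantitative monotonicity bounds. -/
theorem statement0 (M E : ℝ) (hM : 0 < M) (hE : |E| < M)
    (rp rcrit : ℝ)
    (hrp : rp = M + Real.sqrt (M ^ 2 - E ^ 2))
    (hrcrit : rcrit = (3 * M + Real.sqrt (9 * M ^ 2 - 8 * E ^ 2)) / 2)
    (Vmain : ℝ → ℝ)
    (hV : ∀ r : ℝ, Vmain r = (r ^ 2)⁻¹ * (1 - 2 * M / r + E ^ 2 / r ^ 2)) :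
    rcrit ∈ Set.Ioi rp ∧
    (∀ r ∈ Set.Ioi rp, (deriv Vmain r = 0 ↔ r = rcrit)) ∧
    deriv (deriv Vmain) rcrit < 0 ∧
    ∃ c : ℝ, 0 < c ∧
      (∀ r ∈ Set.Icc rp rcrit, c * |r - rcrit| ≤ deriv Vmain r) ∧
      (∀ r ∈ Set.Ici rcrit, c * (r ^ 4)⁻¹ * |r - rcrit| ≤ -deriv Vmain r) := by
  have hE2 : E ^ 2 < M ^ 2 := by
    have h1 : |E| ^ 2 < M ^ 2 := by
      apply pow_lt_pow_left₀ hE (abs_nonneg E)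
      norm_num
    simpa [sq_abs] using h1
  set t := Real.sqrt (M ^ 2 - E ^ 2) with ht_def
  have ht2 : t ^ 2 = M ^ 2 - E ^ 2 := Real.sq_sqrt (by linarith)
  have ht0 : 0 < t := Real.sqrt_pos.mpr (by linarith)
  set s := Real.sqrt (9 * M ^ 2 - 8 * E ^ 2) with hs_def
  have hs2 : s ^ 2 = 9 * M ^ 2 - 8 * E ^ 2 := Real.sq_sqrt (by nlinarith)
  have hs0 : 0 < s := Real.sqrt_pos.mpr (by nlinarith)
  have hsM : M ≤ s := by nlinarith
  have hs3M : s ≤ 3 * M := by nlinarith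
  have hs2t : 2 * t < s := by nlinarith
  set rm : ℝ := (3 * M - s) / 2 with hrm_def
  have hrm0 : 0 ≤ rm := by rw [hrm_def]; linarith
  have hrp0 : 0 < rp := by rw [hrp]; linarith
  have hrmrp : rm < rp := by rw [hrp, hrm_def]; linarith
  have hrprc : rp < rcrit := by rw [hrp, hrcrit]; linarith
  have hrc0 : 0 < rcrit := lt_trans hrp0 hrprc
  have hrc_ne : rcrit ≠ 0 := ne_of_gt hrc0
  have hfact : ∀ r : ℝ, r ^ 2 - 3 * M * r + 2 * E ^ 2 = (r - rm) * (r - rcrit) := by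
    intro r
    rw [hrcrit, hrm_def]
    linear_combination (1 / 4 : ℝ) * hs2
  have hrcs : rcrit - rm = s := by rw [hrcrit, hrm_def]; ring
  have hVfun : Vmain = fun r => (r ^ 2)⁻¹ * (1 - 2 * M / r + E ^ 2 / r ^ 2) := funext hV
  have hD : ∀ r : ℝ, r ≠ 0 →
      HasDerivAt Vmain (-2 * ((r - rm) * (r - rcrit)) / r ^ 5) r := by
    intro r hr
    rw [hVfun]
    have h1 := (hasDerivAt_pow 2 r).inv (pow_ne_zero 2 hr)
    have h2 := (hasDerivAt_const r (2 * M)).div (hasDerivAt_id r) hr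
    have h3 := (hasDerivAt_const r (E ^ 2)).div (hasDerivAt_pow 2 r) (pow_ne_zero 2 hr)
    have h4 := ((hasDerivAt_const r (1 : ℝ)).sub h2).add h3
    have h5 := h1.mul h4
    refine h5.congr_deriv ?_
    rw [← hfact r]
    simp only [Pi.mul_apply, Pi.sub_apply, Pi.add_apply, Pi.div_apply, Pi.inv_apply, id]
    push_cast
    field_simp
    ring
  have hderiv : ∀ r : ℝ, r ≠ 0 → deriv Vmain r = -2 * ((r - rm) * (r - rcrit)) / r ^ 5 :=
    fun r hr => (hD r hr).deriv
  refine ⟨hrprc, ?_, ?_, ?_⟩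
  · intro r hr
    rw [mem_Ioi] at hr
    have hr0 : 0 < r := lt_trans hrp0 hr
    rw [hderiv r (ne_of_gt hr0)]
    constructor
    · intro h
      rw [div_eq_zero_iff] at h
      rcases h with h | h
      · have : (r - rm) * (r - rcrit) = 0 := by linarith
        rcases mul_eq_zero.mp this with h' | h'
        · exfalso; have : r = rm := by linarith
          linarith
        · linarith
      · exact absurd h (pow_ne_zero 5 (ne_of_gt hr0))
    · intro h
      rw [h]
      simp
  · have hev : deriv Vmain =ᶠ[nhds rcrit]
        (fun r => -2 * ((r - rm) * (r - rcrit)) / r ^ 5) := by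
      filter_upwards [isOpen_compl_singleton.mem_nhds hrc_ne] with r hr
      exact hderiv r hr
    rw [hev.deriv_eq]
    have ha : HasDerivAt (fun r : ℝ => r - rm) 1 rcrit := (hasDerivAt_id rcrit).sub_const rm
    have hb : HasDerivAt (fun r : ℝ => r - rcrit) 1 rcrit := (hasDerivAt_id rcrit).sub_const rcrit
    have hmul := ha.mul hb
    have hnum := HasDerivAt.const_mul (-2 : ℝ) hmul
    have hq := hnum.div (hasDerivAt_pow 5 rcrit) (pow_ne_zero 5 hrc_ne)
    rw [show deriv (fun r => -2 * ((r - rm) * (r - rcrit)) / r ^ 5) rcrit = _ from hq.deriv]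
    apply div_neg_of_neg_of_pos
    · have hs' : rcrit - rm = s := hrcs
      simp only [Pi.mul_apply, Pi.sub_apply, Pi.add_apply, Pi.div_apply, Pi.inv_apply, id]
      push_cast
      nlinarith [pow_pos hrc0 5, pow_pos hrc0 4, mul_pos hs0 (pow_pos hrc0 5)]
    · positivity
  · set c1 : ℝ := 2 * (rp - rm) / rcrit ^ 5 with hc1_def
    set c2 : ℝ := 2 * (rcrit - rm) / rcrit with hc2_def
    have hc1pos : 0 < c1 := by
      apply div_pos (by linarith) (pow_pos hrc0 5)
    have hc2pos : 0 < c2 := by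
      apply div_pos (by linarith) hrc0
    set c : ℝ := min c1 c2 with hc_def
    have hcpos : 0 < c := lt_min hc1pos hc2pos
    have hcc1 : c * rcrit ^ 5 ≤ 2 * (rp - rm) := by
      have h := mul_le_mul_of_nonneg_right (min_le_left c1 c2) (pow_pos hrc0 5).le
      rw [hc1_def] at h
      rw [div_mul_cancel₀] at h
      · exact le_trans h (le_refl _)
      · exact ne_of_gt (pow_pos hrc0 5)
    have hcc2 : c * rcrit ≤ 2 * (rcrit - rm) := by
      have h := mul_le_mul_of_nonneg_right (min_le_right c1 c2) hrc0.le
      rw [hc2_def] at h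
      rw [div_mul_cancel₀] at h
      · exact h
      · exact hrc_ne
    have hc2' : c ≤ 2 := by
      have : c * rcrit ≤ 2 * rcrit := by linarith
      exact le_of_mul_le_mul_right (by linarith [this]) hrc0
    refine ⟨c, hcpos, ?_, ?_⟩
    · rintro r ⟨hr1, hr2⟩
      have hr0 : 0 < r := lt_of_lt_of_le hrp0 hr1
      rw [hderiv r (ne_of_gt hr0), abs_of_nonpos (by linarith : r - rcrit ≤ 0),
        le_div_iff₀ (pow_pos hr0 5)]
      have h5 : r ^ 5 ≤ rcrit ^ 5 := pow_le_pow_left₀ hr0.le hr2 5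
      have hrcr : (0:ℝ) ≤ rcrit - r := by linarith
      have step1 : c * (rcrit - r) * r ^ 5 ≤ c * (rcrit - r) * rcrit ^ 5 :=
        mul_le_mul_of_nonneg_left h5 (mul_nonneg hcpos.le hrcr)
      have step2 : c * rcrit ^ 5 * (rcrit - r) ≤ 2 * (rp - rm) * (rcrit - r) :=
        mul_le_mul_of_nonneg_right hcc1 hrcr
      have step3 : 2 * (rp - rm) * (rcrit - r) ≤ 2 * (r - rm) * (rcrit - r) :=
        mul_le_mul_of_nonneg_right (by linarith) hrcr
      calc c * -(r - rcrit) * r ^ 5 = c * (rcrit - r) * r ^ 5 := by ring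
        _ ≤ c * (rcrit - r) * rcrit ^ 5 := step1
        _ = c * rcrit ^ 5 * (rcrit - r) := by ring
        _ ≤ 2 * (rp - rm) * (rcrit - r) := step2
        _ ≤ 2 * (r - rm) * (rcrit - r) := step3
        _ = -2 * ((r - rm) * (r - rcrit)) := by ring
    · intro r hr
      rw [mem_Ici] at hr
      have hr0 : 0 < r := lt_of_lt_of_le hrc0 hr
      rw [hderiv r (ne_of_gt hr0), abs_of_nonneg (by linarith : (0:ℝ) ≤ r - rcrit)]
      have hrw : -(-2 * ((r - rm) * (r - rcrit)) / r ^ 5)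
          = 2 * ((r - rm) * (r - rcrit)) / r ^ 5 := by ring
      rw [hrw]
      have hlhs : c * (r ^ 4)⁻¹ * (r - rcrit) = c * (r - rcrit) / r ^ 4 := by ring
      rw [hlhs, div_le_div_iff₀ (pow_pos hr0 4) (pow_pos hr0 5)]
      have hlin : c * r ≤ 2 * (r - rm) := by
        have h1 : c * (r - rcrit) ≤ 2 * (r - rcrit) :=
          mul_le_mul_of_nonneg_right hc2' (by linarith)
        calc c * r = c * rcrit + c * (r - rcrit) := by ring
          _ ≤ 2 * (rcrit - rm) + 2 * (r - rcrit) := add_le_add hcc2 h1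
          _ = 2 * (r - rm) := by ring
      have hnn : (0:ℝ) ≤ (r - rcrit) * r ^ 4 :=
        mul_nonneg (by linarith) (pow_pos hr0 4).le
      calc c * (r - rcrit) * r ^ 5 = c * r * ((r - rcrit) * r ^ 4) := by ring
        _ ≤ 2 * (r - rm) * ((r - rcrit) * r ^ 4) := mul_le_mul_of_nonneg_right hlin hnn
        _ = 2 * ((r - rm) * (r - rcrit)) * r ^ 4 := by ring
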